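/- Let g be continuous, odd, with g = g₁ − g₂, g₁(s)/s → 0 as s → 0⁺ and g₂(s) ≥ ms for s ≥ 0, m > 0. If ũ ∈ H¹(ℝ^N)\{0} satisfies g(ũ(x)) = 0 for a.e. x ∈ ℝ^N, then a contradiction follows; i.e., θ := ψ(ũ)^{-1}∫ g(ũ)ũ dx ≠ 0 whenever ũ ≠ 0 solves −θΔũ = g(ũ) weakly with this θ. -/

import Mathlib

open MeasureTheory Filter Topology

noncomputable section

/-- Membership in `H¹(ℝ^N)` via the translation characterization:
`v ∈ L²` and `‖v(·+h) − v‖_{L²} ≤ C|h|` for all `h`. -/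
def MemH1Q (N : ℕ) (v : EuclideanSpace ℝ (Fin N) → ℝ) : Prop :=
  MemLp v 2 volume ∧
  ∃ C : ℝ, ∀ h : EuclideanSpace ℝ (Fin N),
    (∫ x, (v (x + h) - v x) ^ 2) ≤ C * ‖h‖ ^ 2

/-- from the proof of Lemma 4.2: let `g = g₁ − g₂` be continuous and odd
with `g₁(s)/s → 0` as `s → 0⁺` and `g₂(s) ≥ m s` for `s ≥ 0`, `m > 0`. If a nonzero
`ũ ∈ H¹(ℝ^N)` satisfies `g(ũ(x)) = 0` for a.e. `x`, then a contradiction follows; in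
particular the Lagrange-type number `θ = ψ(ũ)^{-1}∫ g(ũ)ũ` cannot vanish. -/
theorem g_of_u_ae_zero_contradiction (N : ℕ) (hN : 3 ≤ N)
    (g g₁ g₂ : ℝ → ℝ) (m : ℝ) (hm : 0 < m)
    (hgcont : Continuous g) (hgodd : ∀ s, g (-s) = - g s)
    (hsplit : ∀ s, g s = g₁ s - g₂ s)
    (hg₁0 : Tendsto (fun s => g₁ s / s) (𝓝[>] (0:ℝ)) (𝓝 0))
    (hg₂lin : ∀ s ≥ 0, m * s ≤ g₂ s)
    (u : EuclideanSpace ℝ (Fin N) → ℝ)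
    (hu : MemH1Q N u)
    (hnz : ¬ (u =ᵐ[volume] (fun _ => (0:ℝ))))
    (hg0 : ∀ᵐ x ∂volume, g (u x) = 0) : False := by
  classical
  obtain ⟨huL2, C, hC⟩ := hu
  -- Step 1: g ≠ 0 near (but not at) 0
  obtain ⟨δ, hδpos, hgδ⟩ : ∃ δ > 0, ∀ s : ℝ, s ≠ 0 → |s| < δ → g s ≠ 0 := by
    obtain ⟨δ, hδpos, hδ⟩ := Metric.tendsto_nhdsWithin_nhds.mp hg₁0 m hm
    refine ⟨δ, hδpos, ?_⟩
    have key : ∀ t : ℝ, 0 < t → t < δ → g t < 0 := by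
      intro t ht htδ
      have h1 := hδ (Set.mem_Ioi.mpr ht) (by rw [Real.dist_eq, sub_zero, abs_of_pos ht]; exact htδ)
      rw [Real.dist_eq, sub_zero, abs_lt] at h1
      have h2 : g₁ t < m * t := by
        calc g₁ t = (g₁ t / t) * t := by field_simp
        _ < m * t := mul_lt_mul_of_pos_right h1.2 ht
      have h4 := hg₂lin t ht.le
      have h5 := hsplit t
      linarith
    intro s hs hslt hc
    rcases hs.lt_or_gt with h | h
    · have h6 : g (-s) < 0 := key (-s) (by linarith) (by rw [abs_of_neg h] at hslt; linarith)
      rw [hgodd, hc] at h6; simp at h6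
    · have := key s h (by rwa [abs_of_pos h] at hslt); rw [hc] at this; exact lt_irrefl 0 this
  -- measurable representative
  obtain ⟨w, hwmeas, hwu⟩ : ∃ w : EuclideanSpace ℝ (Fin N) → ℝ,
      Measurable w ∧ u =ᵐ[volume] w := by
    have h := huL2.aestronglyMeasurable
    exact ⟨h.mk u, h.stronglyMeasurable_mk.measurable, h.ae_eq_mk⟩
  have hwL2 : MemLp w 2 volume := huL2.ae_eq hwu
  -- Step 2: a.e. dichotomy for w
  have hdich : ∀ᵐ x ∂(volume : Measure (EuclideanSpace ℝ (Fin N))),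
      w x = u x ∧ (w x = 0 ∨ δ ≤ |w x|) := by
    filter_upwards [hg0, hwu] with x hx hx2
    refine ⟨hx2.symm, ?_⟩
    by_contra hcon
    push_neg at hcon
    exact hgδ (w x) hcon.1 hcon.2 (by rw [← hx2]; exact hx)
  -- the bad set
  set A : Set (EuclideanSpace ℝ (Fin N)) := {x | δ ≤ |w x|} with hA
  have hAmeas : MeasurableSet A := measurableSet_le measurable_const hwmeas.abs
  have hAfin : volume A < ⊤ := by
    have := hwL2.meas_ge_lt_top (p := 2) two_ne_zero (by norm_num)
      (ε := δ.toNNReal) (by simp [hδpos, Real.toNNReal_eq_zero, not_le])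
    refine lt_of_le_of_lt (le_of_eq ?_) this
    congr 1
    ext x
    simp only [Set.mem_setOf_eq, hA]
    rw [← NNReal.coe_le_coe, Real.coe_toNNReal _ hδpos.le, coe_nnnorm, Real.norm_eq_abs]
  -- translated sets
  set T : EuclideanSpace ℝ (Fin N) → Set (EuclideanSpace ℝ (Fin N)) :=
    fun v => {x | x + v ∈ A} with hT
  have hTmeas : ∀ v, MeasurableSet (T v) := fun v =>
    (measurable_add_const v) hAmeas
  have hmp : ∀ v : EuclideanSpace ℝ (Fin N),
      MeasurePreserving (fun x => x + v) (volume : Measure (EuclideanSpace ℝ (Fin N))) volume :=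
    fun v => measurePreserving_add_right volume v
  -- Step 4: quantitative bound
  have hkey : ∀ h : EuclideanSpace ℝ (Fin N),
      δ ^ 2 * (volume (A \ T h)).toReal ≤ C * ‖h‖ ^ 2 := by
    intro h
    set S := A \ T h with hS
    have hSmeas : MeasurableSet S := hAmeas.diff (hTmeas h)
    have hSfin : volume S < ⊤ := lt_of_le_of_lt (measure_mono Set.diff_subset) hAfin
    have huh : MemLp (fun x => u (x + h)) 2 volume := huL2.comp_measurePreserving (hmp h)
    have hint : Integrable (fun x => (u (x + h) - u x) ^ 2) volume :=
      (huh.sub huL2).integrable_sq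
    -- a.e. lower bound on S
    have hae2 : ∀ᵐ x ∂(volume : Measure (EuclideanSpace ℝ (Fin N))),
        w (x + h) = u (x + h) ∧ (w (x + h) = 0 ∨ δ ≤ |w (x + h)|) :=
      (hmp h).quasiMeasurePreserving.ae hdich
    have hbound : ∀ᵐ x ∂(volume : Measure (EuclideanSpace ℝ (Fin N))),
        x ∈ S → δ ^ 2 ≤ (u (x + h) - u x) ^ 2 := by
      filter_upwards [hdich, hae2] with x hx hxh hxS
      obtain ⟨hxS1, hxS2⟩ := hxS
      have h1 : δ ≤ |u x| := by rw [← hx.1]; exact hxS1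
      have h2 : u (x + h) = 0 := by
        rw [← hxh.1]
        rcases hxh.2 with h' | h'
        · exact h'
        · exact absurd h' hxS2
      rw [h2]
      nlinarith [h1, hδpos, sq_abs (u x), abs_nonneg (u x)]
    calc δ ^ 2 * (volume S).toReal = ∫ _ in S, δ ^ 2 ∂volume := by
          rw [setIntegral_const]; rw [smul_eq_mul, mul_comm]; rfl
    _ ≤ ∫ x in S, (u (x + h) - u x) ^ 2 ∂volume := by
          apply setIntegral_mono_on_ae (integrableOn_const hSfin.ne)
            hint.integrableOn hSmeas hbound
    _ ≤ ∫ x, (u (x + h) - u x) ^ 2 := by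
          apply setIntegral_le_integral hint
          filter_upwards with x; positivity
    _ ≤ C * ‖h‖ ^ 2 := hC h
  -- Step 5: subadditivity and iteration
  have hsub : ∀ v h : EuclideanSpace ℝ (Fin N),
      volume (A \ T (v + h)) ≤ volume (A \ T v) + volume (A \ T h) := by
    intro v h
    have hsubset : A \ T (v + h) ⊆ (A \ T v) ∪ ((fun x => x + v) ⁻¹' (A \ T h)) := by
      intro x hx
      by_cases hv : x ∈ T v
      · right
        refine ⟨hv, ?_⟩
        simp only [hT, Set.mem_setOf_eq] at hx ⊢
        intro hcon
        exact hx.2 (by rwa [add_assoc] at hcon)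
      · exact Or.inl ⟨hx.1, hv⟩
    calc volume (A \ T (v + h)) ≤ volume ((A \ T v) ∪ ((fun x => x + v) ⁻¹' (A \ T h))) :=
          measure_mono hsubset
    _ ≤ volume (A \ T v) + volume ((fun x => x + v) ⁻¹' (A \ T h)) := measure_union_le _ _
    _ = volume (A \ T v) + volume (A \ T h) := by rw [(hmp v).measure_preimage
          ((hAmeas.diff (hTmeas h)).nullMeasurableSet)]
  have hT0 : volume (A \ T 0) = 0 := by
    have : A \ T 0 = ∅ := by
      ext x; simp [hT, hA]
    rw [this, measure_empty]
  have hiter : ∀ (n : ℕ) (h : EuclideanSpace ℝ (Fin N)),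
      volume (A \ T ((n : ℝ) • h)) ≤ n * volume (A \ T h) := by
    intro n
    induction n with
    | zero => intro h; simp [hT0]
    | succ n ih =>
      intro h
      have : ((n + 1 : ℕ) : ℝ) • h = (n : ℝ) • h + h := by
        push_cast; rw [add_smul, one_smul]
      rw [this]
      calc volume (A \ T ((n : ℝ) • h + h)) ≤ volume (A \ T ((n : ℝ) • h)) + volume (A \ T h) :=
            hsub _ h
      _ ≤ n * volume (A \ T h) + volume (A \ T h) := add_le_add_left (ih h) _
      _ = ((n + 1 : ℕ) : ℕ) * volume (A \ T h) := by push_cast; ring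
  -- Step 5': vanishing
  have hvanish : ∀ H : EuclideanSpace ℝ (Fin N), volume (A \ T H) = 0 := by
    intro H
    have hfin : ∀ v, volume (A \ T v) ≠ ⊤ := fun v =>
      (lt_of_le_of_lt (measure_mono Set.diff_subset) hAfin).ne
    have hbnd : ∀ n : ℕ, 1 ≤ n →
        (volume (A \ T H)).toReal ≤ (C * ‖H‖ ^ 2 / δ ^ 2) / n := by
      intro n hn
      have hn0 : (n : ℝ) ≠ 0 := by positivity
      set h := (n : ℝ)⁻¹ • H with hh
      have hnh : (n : ℝ) • h = H := by rw [hh, smul_smul, mul_inv_cancel₀ hn0, one_smul]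
      have h1 : volume (A \ T H) ≤ n * volume (A \ T h) := by
        rw [← hnh]; exact hiter n h
      have h2 : δ ^ 2 * (volume (A \ T h)).toReal ≤ C * ‖h‖ ^ 2 := hkey h
      have h3 : ‖h‖ ^ 2 = ‖H‖ ^ 2 / (n : ℝ) ^ 2 := by
        rw [hh, norm_smul, mul_pow, norm_inv, Real.norm_natCast]
        field_simp
      have h4 : (volume (A \ T H)).toReal ≤ (n : ℝ) * (volume (A \ T h)).toReal := by
        have := ENNReal.toReal_mono (by
          exact ENNReal.mul_ne_top (by simp) (hfin h)) h1
        rw [ENNReal.toReal_mul] at this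
        simpa using this
      have h5 : (volume (A \ T h)).toReal ≤ C * ‖H‖ ^ 2 / ((n:ℝ) ^ 2 * δ ^ 2) := by
        rw [h3] at h2
        have hδ2 : (0:ℝ) < δ ^ 2 := by positivity
        rw [le_div_iff₀ (by positivity)]
        calc (volume (A \ T h)).toReal * ((n:ℝ) ^ 2 * δ ^ 2)
            = (δ ^ 2 * (volume (A \ T h)).toReal) * (n:ℝ) ^ 2 := by ring
        _ ≤ (C * (‖H‖ ^ 2 / (n : ℝ) ^ 2)) * (n:ℝ) ^ 2 := by
              apply mul_le_mul_of_nonneg_right h2 (by positivity)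
        _ = C * ‖H‖ ^ 2 := by field_simp
      calc (volume (A \ T H)).toReal ≤ (n : ℝ) * (volume (A \ T h)).toReal := h4
      _ ≤ (n : ℝ) * (C * ‖H‖ ^ 2 / ((n:ℝ) ^ 2 * δ ^ 2)) := by
            apply mul_le_mul_of_nonneg_left h5 (by positivity)
      _ = (C * ‖H‖ ^ 2 / δ ^ 2) / n := by field_simp
    have hle0 : (volume (A \ T H)).toReal ≤ 0 := by
      have htend : Tendsto (fun n : ℕ => (C * ‖H‖ ^ 2 / δ ^ 2) / n) atTop (𝓝 0) :=
        tendsto_const_div_atTop_nhds_zero_nat _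
      apply ge_of_tendsto htend
      filter_upwards [eventually_ge_atTop 1] with n hn
      exact hbnd n hn
    have := le_antisymm hle0 ENNReal.toReal_nonneg
    rcases (ENNReal.toReal_eq_zero_iff _).mp this with h | h
    · exact h
    · exact absurd h (hfin H)
  -- Step 6: full ae invariance
  have hinv : ∀ v : EuclideanSpace ℝ (Fin N), T v =ᵐ[volume] A := by
    intro v
    rw [MeasureTheory.ae_eq_set]
    constructor
    · -- volume (T v \ A) = 0
      have : (fun x => x + (-v)) ⁻¹' (T v \ A) = A \ T (-v) := by
        ext x
        simp only [Set.mem_preimage, Set.mem_diff, hT, Set.mem_setOf_eq]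
        constructor
        · rintro ⟨h1, h2⟩
          exact ⟨by rwa [neg_add_cancel_right] at h1, h2⟩
        · rintro ⟨h1, h2⟩
          exact ⟨by rwa [neg_add_cancel_right], h2⟩
      have hpre := (hmp (-v)).measure_preimage
        (((hTmeas v).diff hAmeas).nullMeasurableSet)
      rw [this, hvanish (-v)] at hpre
      exact hpre.symm
    · exact hvanish v
  -- Step 7: A has measure zero
  have hball : ∀ R : ℝ, 0 < R → volume (A ∩ Metric.ball 0 R) = 0 := by
    intro R hR
    set e₁ : EuclideanSpace ℝ (Fin N) := EuclideanSpace.single (⟨0, by omega⟩ : Fin N) (1:ℝ)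
      with he₁
    have he₁norm : ‖e₁‖ = 1 := by rw [he₁, EuclideanSpace.norm_single, norm_one]
    set c : ℕ → EuclideanSpace ℝ (Fin N) := fun k => (3 * R * k) • e₁ with hc
    have hdist : ∀ k j : ℕ, k ≠ j → R + R ≤ dist (c k) (c j) := by
      intro k j hkj
      have habs : (1:ℝ) ≤ |(k:ℝ) - (j:ℝ)| := by
        rcases Nat.lt_or_ge k j with hlt | hge
        · have hcast : (k:ℝ) + 1 ≤ j := by exact_mod_cast hlt
          rw [abs_sub_comm, abs_of_pos (by linarith)]; linarith
        · have hjk : j < k := lt_of_le_of_ne hge (Ne.symm hkj)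
          have hcast : (j:ℝ) + 1 ≤ k := by exact_mod_cast hjk
          rw [abs_of_pos (by linarith)]; linarith
      have hd : dist (c k) (c j) = 3 * R * |(k:ℝ) - (j:ℝ)| := by
        rw [hc]
        simp only [dist_eq_norm, ← sub_smul, norm_smul, he₁norm, mul_one, Real.norm_eq_abs]
        rw [show (3 * R * (k:ℝ)) - 3 * R * (j:ℝ) = 3 * R * ((k:ℝ) - (j:ℝ)) by ring,
          abs_mul, abs_of_pos (show (0:ℝ) < 3 * R by positivity)]
      rw [hd]; nlinarith
    have hSdisj : Pairwise (Function.onFun Disjoint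
        (fun k : ℕ => A ∩ Metric.ball (c k) R)) := by
      intro k j hkj
      exact Disjoint.inter_left' _ (Disjoint.inter_right' _
        (Metric.ball_disjoint_ball (hdist k j hkj)))
    have hSmeas : ∀ k : ℕ, MeasurableSet (A ∩ Metric.ball (c k) R) := fun k =>
      hAmeas.inter measurableSet_ball
    have hSval : ∀ k : ℕ, volume (A ∩ Metric.ball (c k) R) = volume (A ∩ Metric.ball 0 R) := by
      intro k
      have hpre : (fun x => x + c k) ⁻¹' (A ∩ Metric.ball (c k) R)
          = T (c k) ∩ Metric.ball 0 R := by
        ext x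
        simp only [Set.mem_preimage, Set.mem_inter_iff, hT, Set.mem_setOf_eq,
          Metric.mem_ball, dist_eq_norm, add_sub_cancel_right, sub_zero]
      have h1 := (hmp (c k)).measure_preimage
        ((hSmeas k).nullMeasurableSet)
      rw [hpre] at h1
      rw [← h1]
      exact measure_congr (MeasureTheory.ae_eq_set_inter (hinv (c k)) (ae_eq_refl _))
    by_contra hc0
    have htop : volume (⋃ k : ℕ, A ∩ Metric.ball (c k) R) = ⊤ := by
      rw [measure_iUnion hSdisj hSmeas]
      simp_rw [hSval]
      exact ENNReal.tsum_const_eq_top_of_ne_zero hc0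
    have : volume (⋃ k : ℕ, A ∩ Metric.ball (c k) R) ≤ volume A :=
      measure_mono (Set.iUnion_subset fun k => Set.inter_subset_left)
    rw [htop] at this
    exact absurd (lt_of_le_of_lt this hAfin) (lt_irrefl ⊤)
  have hA0 : volume A = 0 := by
    have hcover : A ⊆ ⋃ n : ℕ, A ∩ Metric.ball 0 ((n:ℝ) + 1) := by
      intro x hx
      obtain ⟨n, hn⟩ := exists_nat_gt ‖x‖
      exact Set.mem_iUnion.mpr ⟨n, hx, by
        rw [Metric.mem_ball, dist_zero_right]; linarith⟩
    refine measure_mono_null hcover (measure_iUnion_null fun n => hball _ (by positivity))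
  -- Step 8: conclusion
  apply hnz
  have : ∀ᵐ x ∂(volume : Measure (EuclideanSpace ℝ (Fin N))), x ∉ A :=
    measure_eq_zero_iff_ae_notMem.mp hA0
  filter_upwards [this, hdich] with x hx hx2
  rcases hx2.2 with h | h
  · rw [← hx2.1]; exact h
  · exact absurd h hx
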